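/- Let H be a real Hilbert space, F : H → H a contraction with factor ρ ∈ (0,1) with fixed point u*, and (S_α)_{α>0} a family of non-expansive self-maps of H. Let p ∈ (0,2) and M ≥ 0 be such that ‖S_α(u*) − u*‖ ≤ M α^{1−p/2} for all α > 0. Fix c_0 > 0, ρ̃ ∈ (ρ, 1), and set α_k := (ρ̃^{k+1} c_0)^{2/(2−p)} for k ≥ 0. Then the iteration u_0 := 0, u_{k+1} := S_{α_k}(F(u_k)) satisfies for all k ≥ 0: ‖u_k − u*‖ ≤ (‖u*‖ + ((1+ρ)/(1−ρ)) c_0 M ρ̃/(ρ̃ − ρ)) ρ̃^k. -/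

import Mathlib

/-- **A priori parameter choice, algebraic decay, rate `ρ̃ > ρ`.** With
`α_k = (ρ̃^{k+1} c₀)^{2/(2-p)}` and thresholding error `‖S_α u* - u*‖ ≤ M α^{1-p/2}`, the
iterates `u_{k+1} = S_{α_k}(F u_k)`, `u_0 = 0`, satisfy
`‖u_k - u*‖ ≤ (‖u*‖ + ((1+ρ)/(1-ρ)) c₀ M ρ̃/(ρ̃-ρ)) ρ̃^k`. -/
theorem apriori_iteration_wlp_rate
    {H : Type*} [NormedAddCommGroup H] [InnerProductSpace ℝ H] [CompleteSpace H]
    (F : H → H) (ρ : ℝ) (hρ0 : 0 < ρ) (hρ1 : ρ < 1)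
    (hF : ∀ v w : H, ‖F v - F w‖ ≤ ρ * ‖v - w‖)
    (ustar : H) (hfix : F ustar = ustar)
    (S : ℝ → H → H)
    (hS : ∀ α : ℝ, 0 < α → ∀ v w : H, ‖S α v - S α w‖ ≤ ‖v - w‖)
    (p : ℝ) (hp0 : 0 < p) (hp2 : p < 2)
    (M : ℝ) (hM : 0 ≤ M)
    (happrox : ∀ α : ℝ, 0 < α → ‖S α ustar - ustar‖ ≤ M * α ^ (1 - p/2))
    (c0 : ℝ) (hc0 : 0 < c0)
    (ρt : ℝ) (hρρt : ρ < ρt) (hρt1 : ρt < 1)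
    (u : ℕ → H) (hu0 : u 0 = 0)
    (hrec : ∀ k : ℕ, u (k + 1) = S ((ρt ^ (k + 1) * c0) ^ (2 / (2 - p))) (F (u k))) :
    ∀ k : ℕ,
      ‖u k - ustar‖
        ≤ (‖ustar‖ + ((1 + ρ) / (1 - ρ)) * c0 * M * ρt / (ρt - ρ)) * ρt ^ k := by
  have hρtpos : 0 < ρt := hρ0.trans hρρt
  have hρtρ : 0 < ρt - ρ := by linarith
  set C := ‖ustar‖ + ((1 + ρ) / (1 - ρ)) * c0 * M * ρt / (ρt - ρ) with hCdef
  have h1ρ : (0:ℝ) < 1 - ρ := by linarith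
  have hterm : 0 ≤ ((1 + ρ) / (1 - ρ)) * c0 * M * ρt / (ρt - ρ) := by positivity
  have hkey : ρ * C + M * (ρt * c0) ≤ C * ρt := by
    have h1 : (1:ℝ) ≤ (1 + ρ) / (1 - ρ) := by
      rw [le_div_iff₀ h1ρ]; linarith
    have h2 : ((1 + ρ) / (1 - ρ)) * c0 * M * ρt / (ρt - ρ) * (ρt - ρ)
        = ((1 + ρ) / (1 - ρ)) * (c0 * M * ρt) := by
      field_simp
    have h3 : c0 * M * ρt ≤ ((1 + ρ) / (1 - ρ)) * (c0 * M * ρt) :=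
      le_mul_of_one_le_left (by positivity) h1
    have h4 : 0 ≤ ‖ustar‖ * (ρt - ρ) := mul_nonneg (norm_nonneg _) hρtρ.le
    rw [hCdef]
    nlinarith [h2, h3, h4]
  intro k
  induction k with
  | zero =>
    simp only [hu0, zero_sub, norm_neg, pow_zero, mul_one]
    exact le_add_of_nonneg_right hterm
  | succ k ih =>
    have hbase : 0 < ρt ^ (k + 1) * c0 := by positivity
    have hαpos : 0 < (ρt ^ (k + 1) * c0) ^ (2 / (2 - p)) :=
      Real.rpow_pos_of_pos hbase _
    have hα : ((ρt ^ (k + 1) * c0) ^ (2 / (2 - p))) ^ (1 - p / 2)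
        = ρt ^ (k + 1) * c0 := by
      rw [← Real.rpow_mul hbase.le]
      rw [show (2 / (2 - p)) * (1 - p / 2) = 1 by
        have hne : (2:ℝ) - p ≠ 0 := by linarith
        field_simp]
      exact Real.rpow_one _
    have htri : ‖u (k + 1) - ustar‖
        ≤ ρ * ‖u k - ustar‖ + M * (ρt ^ (k + 1) * c0) := by
      rw [hrec k]
      calc ‖S ((ρt ^ (k + 1) * c0) ^ (2 / (2 - p))) (F (u k)) - ustar‖
          ≤ ‖S ((ρt ^ (k + 1) * c0) ^ (2 / (2 - p))) (F (u k))
              - S ((ρt ^ (k + 1) * c0) ^ (2 / (2 - p))) ustar‖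
            + ‖S ((ρt ^ (k + 1) * c0) ^ (2 / (2 - p))) ustar - ustar‖ :=
            norm_sub_le_norm_sub_add_norm_sub _ _ _
        _ ≤ ‖F (u k) - ustar‖ + M * ((ρt ^ (k + 1) * c0) ^ (2 / (2 - p))) ^ (1 - p / 2) :=
            add_le_add (hS _ hαpos _ _) (happrox _ hαpos)
        _ = ‖F (u k) - F ustar‖ + M * (ρt ^ (k + 1) * c0) := by rw [hfix, hα]
        _ ≤ ρ * ‖u k - ustar‖ + M * (ρt ^ (k + 1) * c0) :=
            add_le_add (hF _ _) le_rfl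
    have hpowpos : (0:ℝ) < ρt ^ k := pow_pos hρtpos k
    calc ‖u (k + 1) - ustar‖ ≤ ρ * ‖u k - ustar‖ + M * (ρt ^ (k + 1) * c0) := htri
      _ ≤ ρ * (C * ρt ^ k) + M * (ρt ^ (k + 1) * c0) := by
          have := mul_le_mul_of_nonneg_left ih hρ0.le
          linarith
      _ = (ρ * C + M * (ρt * c0)) * ρt ^ k := by ring
      _ ≤ (C * ρt) * ρt ^ k := mul_le_mul_of_nonneg_right hkey hpowpos.le
      _ = C * ρt ^ (k + 1) := by ring
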